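/- Let ω, λ ∈ ℂ with λ ≠ 0, and let Ψ^L, Ψ^R : ℤ → ℂ satisfy the eigenvalue equations of the Wojcik model with eigenvalue λ and phase ω. Let z ∈ ℂ, z ≠ 0, be such that the families (Ψ^L(x) z^x)_{x ≤ −1} and (Ψ^R(x) z^x)_{x ≤ −1} are absolutely summable, and set f^L_−(z) = Σ_{x=−1}^{−∞} Ψ^L(x) z^x, f^R_−(z) = Σ_{x=−1}^{−∞} Ψ^R(x) z^x, α = Ψ^L(0), β = Ψ^R(0). Then (λ − 1/(√2 z)) f^L_−(z) − (1/(√2 z)) f^R_−(z) = ω(α+β)/(√2 z) and −(z/√2) f^L_−(z) + (λ + z/√2) f^R_−(z) = −λβ. -/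

import Mathlib

noncomputable section

/-- The coin phase of the Wojcik model: `ω` at the origin, `1` elsewhere. -/
def wojcikCoin (ω : ℂ) (x : ℤ) : ℂ := if x = 0 then ω else 1

/-- `ΨL, ΨR : ℤ → ℂ` satisfy the eigenvalue equations of the Wojcik model with
eigenvalue `lam` and phase `ω`. -/
def WojcikEigenEq (ω lam : ℂ) (ΨL ΨR : ℤ → ℂ) : Prop :=
  ∀ x : ℤ,
    lam * ΨL x = wojcikCoin ω (x + 1) / (Real.sqrt 2 : ℂ) * (ΨL (x + 1) + ΨR (x + 1)) ∧
    lam * ΨR x = wojcikCoin ω (x - 1) / (Real.sqrt 2 : ℂ) * (ΨL (x - 1) - ΨR (x - 1))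

theorem wojcik_generating_function_negative_part
    (ω lam : ℂ) (hlam : lam ≠ 0) (ΨL ΨR : ℤ → ℂ)
    (heig : WojcikEigenEq ω lam ΨL ΨR)
    (z : ℂ) (hz : z ≠ 0)
    (hL : Summable fun n : ℕ => ‖ΨL (-((n : ℤ) + 1)) * z ^ (-((n : ℤ) + 1))‖)
    (hR : Summable fun n : ℕ => ‖ΨR (-((n : ℤ) + 1)) * z ^ (-((n : ℤ) + 1))‖)
    (fL fR α β : ℂ)
    (hfL : fL = ∑' n : ℕ, ΨL (-((n : ℤ) + 1)) * z ^ (-((n : ℤ) + 1)))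
    (hfR : fR = ∑' n : ℕ, ΨR (-((n : ℤ) + 1)) * z ^ (-((n : ℤ) + 1)))
    (hα : α = ΨL 0) (hβ : β = ΨR 0) :
    (lam - 1 / ((Real.sqrt 2 : ℂ) * z)) * fL - 1 / ((Real.sqrt 2 : ℂ) * z) * fR =
      ω * (α + β) / ((Real.sqrt 2 : ℂ) * z) ∧
    -(z / (Real.sqrt 2 : ℂ)) * fL + (lam + z / (Real.sqrt 2 : ℂ)) * fR = -lam * β := by
  have h2 : (Real.sqrt 2 : ℂ) ≠ 0 :=
    Complex.ofReal_ne_zero.mpr (Real.sqrt_ne_zero'.mpr (by norm_num))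
  set aL : ℕ → ℂ := fun n => ΨL (-((n : ℤ) + 1)) * z ^ (-((n : ℤ) + 1)) with haL
  set aR : ℕ → ℂ := fun n => ΨR (-((n : ℤ) + 1)) * z ^ (-((n : ℤ) + 1)) with haR
  have hsL : Summable aL := Summable.of_norm (by
    exact hL)
  have hsR : Summable aR := Summable.of_norm (by
    exact hR)
  have hsLs : Summable (fun n => aL (n + 1)) := (summable_nat_add_iff 1).mpr hsL
  have hsRs : Summable (fun n => aR (n + 1)) := (summable_nat_add_iff 1).mpr hsR
  have htL : ∑' n : ℕ, aL (n + 1) = fL - aL 0 := by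
    rw [hfL, Summable.tsum_eq_zero_add hsL]; ring
  have htR : ∑' n : ℕ, aR (n + 1) = fR - aR 0 := by
    rw [hfR, Summable.tsum_eq_zero_add hsR]; ring
  have ha0 : aL 0 = ΨL (-1) * z⁻¹ := by
    show ΨL (-((0 : ℤ) + 1)) * z ^ (-((0 : ℤ) + 1)) = _
    norm_num
  have hb0 : aR 0 = ΨR (-1) * z⁻¹ := by
    show ΨR (-((0 : ℤ) + 1)) * z ^ (-((0 : ℤ) + 1)) = _
    norm_num
  -- key 1
  have key1 : lam * fL = ω * (α + β) / ((Real.sqrt 2 : ℂ) * z)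
      + (fL + fR) / ((Real.sqrt 2 : ℂ) * z) := by
    have hg : Summable (fun n : ℕ => lam * aL n) := hsL.mul_left lam
    have e0 : lam * fL = ∑' n : ℕ, lam * aL n := by rw [hfL, tsum_mul_left]
    rw [e0, Summable.tsum_eq_zero_add hg]
    have e1 : lam * aL 0 = ω * (α + β) / ((Real.sqrt 2 : ℂ) * z) := by
      have h := (heig (-1)).1
      norm_num [wojcikCoin] at h
      rw [ha0, hα, hβ]
      field_simp at h ⊢
      linear_combination h
    have e2 : ∀ n : ℕ, lam * aL (n + 1) = (aL n + aR n) / ((Real.sqrt 2 : ℂ) * z) := by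
      intro n
      have h := (heig (-((n : ℤ) + 1) - 1)).1
      have hx : (-((n : ℤ) + 1) - 1) + 1 = -((n : ℤ) + 1) := by ring
      rw [hx] at h
      have hc : wojcikCoin ω (-((n : ℤ) + 1)) = 1 := by
        simp only [wojcikCoin, ite_eq_right_iff]; intro hh; omega
      rw [hc] at h
      have hLn : aL n = ΨL (-((n : ℤ) + 1)) * z ^ (-((n : ℤ) + 1)) := rfl
      have hRn : aR n = ΨR (-((n : ℤ) + 1)) * z ^ (-((n : ℤ) + 1)) := rfl
      have hL1 : aL (n + 1) = ΨL (-((n : ℤ) + 1) - 1) * (z ^ (-((n : ℤ) + 1)) * z⁻¹) := by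
        have hcast : (-((↑(n + 1) : ℤ) + 1)) = -((n : ℤ) + 1) - 1 := by push_cast; ring
        show ΨL (-((↑(n + 1) : ℤ) + 1)) * z ^ (-((↑(n + 1) : ℤ) + 1)) = _
        rw [hcast, zpow_sub_one₀ hz]
      rw [hL1, hLn, hRn]
      set A := ΨL (-((n : ℤ) + 1))
      set B := ΨR (-((n : ℤ) + 1))
      set C := ΨL (-((n : ℤ) + 1) - 1)
      set P := z ^ (-((n : ℤ) + 1))
      field_simp at h ⊢
      linear_combination P * h
    calc lam * aL 0 + ∑' n : ℕ, lam * aL (n + 1)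
        = lam * aL 0 + ∑' n : ℕ, (aL n + aR n) / ((Real.sqrt 2 : ℂ) * z) := by
          rw [tsum_congr e2]
      _ = ω * (α + β) / ((Real.sqrt 2 : ℂ) * z) + (fL + fR) / ((Real.sqrt 2 : ℂ) * z) := by
          rw [e1, tsum_div_const, Summable.tsum_add hsL hsR, ← hfL, ← hfR]
  -- key 2
  have key2 : lam * fR = z / (Real.sqrt 2 : ℂ) * (fL - fR) - lam * β := by
    have e0 : lam * fR = ∑' n : ℕ, lam * aR n := by rw [hfR, tsum_mul_left]
    have e2 : ∀ n : ℕ, lam * aR n = z / (Real.sqrt 2 : ℂ) * (aL (n + 1) - aR (n + 1)) := by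
      intro n
      have h := (heig (-((n : ℤ) + 1))).2
      have hc : wojcikCoin ω (-((n : ℤ) + 1) - 1) = 1 := by
        simp only [wojcikCoin, ite_eq_right_iff]; intro hh; omega
      rw [hc] at h
      have hcast : (-((↑(n + 1) : ℤ) + 1)) = -((n : ℤ) + 1) - 1 := by push_cast; ring
      have hRn : aR n = ΨR (-((n : ℤ) + 1)) * z ^ (-((n : ℤ) + 1)) := rfl
      have hL1 : aL (n + 1) = ΨL (-((n : ℤ) + 1) - 1) * (z ^ (-((n : ℤ) + 1)) * z⁻¹) := by
        show ΨL (-((↑(n + 1) : ℤ) + 1)) * z ^ (-((↑(n + 1) : ℤ) + 1)) = _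
        rw [hcast, zpow_sub_one₀ hz]
      have hR1 : aR (n + 1) = ΨR (-((n : ℤ) + 1) - 1) * (z ^ (-((n : ℤ) + 1)) * z⁻¹) := by
        show ΨR (-((↑(n + 1) : ℤ) + 1)) * z ^ (-((↑(n + 1) : ℤ) + 1)) = _
        rw [hcast, zpow_sub_one₀ hz]
      rw [hL1, hR1, hRn]
      set B := ΨR (-((n : ℤ) + 1))
      set C := ΨL (-((n : ℤ) + 1) - 1)
      set D := ΨR (-((n : ℤ) + 1) - 1)
      set P := z ^ (-((n : ℤ) + 1))
      field_simp at h ⊢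
      linear_combination P * h
    have e3 : z / (Real.sqrt 2 : ℂ) * (aL 0 - aR 0) = lam * β := by
      have h := (heig 0).2
      norm_num [wojcikCoin] at h
      rw [ha0, hb0, hβ]
      field_simp at h ⊢
      linear_combination (-1) * h
    calc lam * fR = ∑' n : ℕ, z / (Real.sqrt 2 : ℂ) * (aL (n + 1) - aR (n + 1)) := by
          rw [e0, tsum_congr e2]
      _ = z / (Real.sqrt 2 : ℂ) * ((fL - aL 0) - (fR - aR 0)) := by
          rw [tsum_mul_left, Summable.tsum_sub hsLs hsRs, htL, htR]
      _ = z / (Real.sqrt 2 : ℂ) * (fL - fR) - lam * β := by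
          rw [← e3]; ring
  constructor
  · field_simp
    field_simp at key1
    linear_combination key1
  · linear_combination key2

end
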